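/- ℓ¹-deviation estimate between ρⁿ and Wⁿ for geometric weights: assume the weights are geometric, γ_k = γ₀ (1−γ₀)^k with γ₀ ∈ (0,1), assume the CFL condition λ(M + L) ≤ 1, and let ε, h, c > 0 satisfy (1−γ₀)/γ₀ ≤ c ε / h. Then for every n ∈ ℕ: h ∑_{j∈ℤ} |Wⁿ_j − ρⁿ_j| ≤ c ε ∑_{j∈ℤ} |Wⁿ_{j+1} − Wⁿ_j|, where the sums of nonnegative terms are valued in [0,∞]. -/

import Mathlib

open scoped ENNReal

/-- ℓ¹-deviation estimate between `ρⁿ` and `Wⁿ` for geometric weights: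
if `(1−γ₀)/γ₀ ≤ c ε / h`, then
`h ∑_j |Wⁿ_j − ρⁿ_j| ≤ c ε ∑_j |Wⁿ_{j+1} − Wⁿ_j|` (sums in `[0,∞]`). -/
theorem godunov_l1_deviation_geometric
    (lam M L : ℝ) (hlam : 0 < lam) (hM : 0 ≤ M) (hL : 0 ≤ L)
    (V : ℝ → ℝ)
    (hVlip : ∀ x y : ℝ, |V x - V y| ≤ L * |x - y|)
    (hVmono : ∀ x ∈ Set.Icc (0:ℝ) 1, ∀ y ∈ Set.Icc (0:ℝ) 1, x ≤ y → V y ≤ V x)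
    (hVbd : ∀ ξ ∈ Set.Icc (0:ℝ) 1, V ξ ∈ Set.Icc (0:ℝ) M)
    (γ : ℕ → ℝ)
    (hγnn : ∀ k, 0 ≤ γ k) (hγmono : ∀ k, γ (k+1) ≤ γ k)
    (hγsum : HasSum γ 1)
    (ρ0 : ℤ → ℝ) (hρ0 : ∀ j, ρ0 j ∈ Set.Icc (0:ℝ) 1)
    (ρ W : ℕ → ℤ → ℝ)
    (hinit : ∀ j : ℤ, ρ 0 j = ρ0 j)
    (hW : ∀ (n : ℕ) (j : ℤ), W n j = ∑' k : ℕ, γ k * ρ n (j + (k:ℤ)))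
    (hupd : ∀ (n : ℕ) (j : ℤ),
      ρ (n+1) j = ρ n j + lam * (ρ n (j-1) * V (W n j) - ρ n j * V (W n (j+1))))
    (hCFL : lam * (M + L) ≤ 1)
    (γ0 : ℝ) (hγ0 : γ0 ∈ Set.Ioo (0:ℝ) 1)
    (hgeom : ∀ k : ℕ, γ k = γ0 * (1 - γ0)^k)
    (ε h c : ℝ) (hε : 0 < ε) (hh : 0 < h) (hc : 0 < c)
    (hratio : (1 - γ0) / γ0 ≤ c * ε / h) :
    ∀ n : ℕ,
      ENNReal.ofReal h * ∑' j : ℤ, ENNReal.ofReal |W n j - ρ n j| ≤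
      ENNReal.ofReal (c * ε) * ∑' j : ℤ, ENNReal.ofReal |W n (j+1) - W n j| := by

  obtain ⟨hγ0pos, hγ0lt⟩ := hγ0
  -- boundedness of ρ n
  have hbound : ∀ n : ℕ, ∃ B : ℝ, 0 ≤ B ∧ ∀ j, |ρ n j| ≤ B := by
    intro n
    induction n with
    | zero =>
      refine ⟨1, zero_le_one, fun j => ?_⟩
      rw [hinit]
      rcases hρ0 j with ⟨h1, h2⟩
      rw [abs_le]; constructor <;> linarith
    | succ n ih =>
      obtain ⟨B, hB0, hB⟩ := ih
      have hnormsum : ∀ j : ℤ, Summable (fun k : ℕ => ‖γ k * ρ n (j + (k:ℤ))‖) := by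
        intro j
        apply Summable.of_nonneg_of_le (fun k => norm_nonneg _)
          (fun k => ?_) (hγsum.summable.mul_right B)
        rw [Real.norm_eq_abs, abs_mul, abs_of_nonneg (hγnn k)]
        exact mul_le_mul_of_nonneg_left (hB _) (hγnn k)
      have hsumm : ∀ j : ℤ, Summable (fun k : ℕ => γ k * ρ n (j + (k:ℤ))) :=
        fun j => (hnormsum j).of_norm
      have hWbd : ∀ j, |W n j| ≤ B := by
        intro j
        rw [hW]
        calc |∑' k : ℕ, γ k * ρ n (j + (k:ℤ))|
            ≤ ∑' k : ℕ, ‖γ k * ρ n (j + (k:ℤ))‖ := norm_tsum_le_tsum_norm (hnormsum j)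
          _ ≤ ∑' k : ℕ, γ k * B := by
              apply Summable.tsum_le_tsum _ (hnormsum j) (hγsum.summable.mul_right B)
              intro k
              rw [Real.norm_eq_abs, abs_mul, abs_of_nonneg (hγnn k)]
              exact mul_le_mul_of_nonneg_left (hB _) (hγnn k)
          _ = B := by rw [(hγsum.mul_right B).tsum_eq, one_mul]
      have hVabs : ∀ x : ℝ, |V x| ≤ M + L * |x| := by
        intro x
        have hV0 : V 0 ∈ Set.Icc (0:ℝ) M := hVbd 0 ⟨le_refl _, zero_le_one⟩
        have h1 := hVlip x 0
        rcases hV0 with ⟨ha, hb⟩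
        have : |V x| ≤ |V x - V 0| + |V 0| := by
          calc |V x| = |(V x - V 0) + V 0| := by ring_nf
            _ ≤ |V x - V 0| + |V 0| := abs_add_le _ _
        rw [abs_of_nonneg ha] at this
        simp only [sub_zero] at h1
        linarith
      refine ⟨B * (1 + 2 * lam * (M + L * B)), by positivity, fun j => ?_⟩
      rw [hupd]
      have hVj : |V (W n j)| ≤ M + L * B := by
        have := hVabs (W n j); have := hWbd j; nlinarith [abs_nonneg (W n j)]
      have hVj1 : |V (W n (j+1))| ≤ M + L * B := by
        have := hVabs (W n (j+1)); have := hWbd (j+1); nlinarith [abs_nonneg (W n (j+1))]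
      have h2 : |ρ n j + lam * (ρ n (j-1) * V (W n j) - ρ n j * V (W n (j+1)))|
          ≤ |ρ n j| + lam * (|ρ n (j-1)| * |V (W n j)| + |ρ n j| * |V (W n (j+1))|) := by
        calc _ ≤ |ρ n j| + |lam * (ρ n (j-1) * V (W n j) - ρ n j * V (W n (j+1)))| :=
              abs_add_le _ _
          _ ≤ _ := by
              rw [abs_mul, abs_of_pos hlam]
              have := abs_sub (ρ n (j-1) * V (W n j)) (ρ n j * V (W n (j+1)))
              rw [abs_mul, abs_mul] at this
              nlinarith
      have hMLB : (0:ℝ) ≤ M + L * B := by positivity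
      have hρj := hB j; have hρj1 := hB (j-1)
      have haj := abs_nonneg (ρ n j); have haj1 := abs_nonneg (ρ n (j-1))
      nlinarith [mul_le_mul hρj1 hVj (abs_nonneg _) hB0,
        mul_le_mul hρj hVj1 (abs_nonneg _) hB0]
  -- key identity
  intro n
  obtain ⟨B, hB0, hB⟩ := hbound n
  have hsumm : ∀ j : ℤ, Summable (fun k : ℕ => γ k * ρ n (j + (k:ℤ))) := by
    intro j
    apply Summable.of_norm_bounded (hγsum.summable.mul_right B)
    intro k
    rw [Real.norm_eq_abs, abs_mul, abs_of_nonneg (hγnn k)]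
    exact mul_le_mul_of_nonneg_left (hB _) (hγnn k)
  have hkey : ∀ j : ℤ, W n j = γ0 * ρ n j + (1 - γ0) * W n (j+1) := by
    intro j
    rw [hW n j, Summable.tsum_eq_zero_add (hsumm j)]
    have h0 : γ 0 * ρ n (j + ((0:ℕ):ℤ)) = γ0 * ρ n j := by
      rw [hgeom]; norm_num
    rw [h0]
    congr 1
    have heq : ∀ k : ℕ, γ (k+1) * ρ n (j + ((k+1:ℕ):ℤ))
        = (1 - γ0) * (γ k * ρ n ((j+1) + (k:ℤ))) := by
      intro k
      rw [hgeom, hgeom]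
      have : j + ((k+1:ℕ):ℤ) = (j+1) + (k:ℤ) := by push_cast; ring
      rw [this]; ring
    rw [tsum_congr heq, tsum_mul_left, hW n (j+1)]
  have hdev : ∀ j : ℤ, W n j - ρ n j = (1 - γ0) / γ0 * (W n (j+1) - W n j) := by
    intro j
    have := hkey j
    field_simp
    nlinarith [hkey j]
  -- pointwise inequality
  have hpt : ∀ j : ℤ, ENNReal.ofReal h * ENNReal.ofReal |W n j - ρ n j|
      ≤ ENNReal.ofReal (c * ε) * ENNReal.ofReal |W n (j+1) - W n j| := by
    intro j
    rw [← ENNReal.ofReal_mul hh.le, ← ENNReal.ofReal_mul (by positivity)]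
    apply ENNReal.ofReal_le_ofReal
    rw [hdev j, abs_mul, abs_of_nonneg (div_nonneg (by linarith) hγ0pos.le)]
    have hfac : h * ((1 - γ0) / γ0) ≤ c * ε := by
      rw [div_le_div_iff₀ hγ0pos hh] at hratio
      rw [mul_comm, div_mul_eq_mul_div, div_le_iff₀ hγ0pos]
      linarith
    have := abs_nonneg (W n (j+1) - W n j)
    nlinarith
  calc ENNReal.ofReal h * ∑' j : ℤ, ENNReal.ofReal |W n j - ρ n j|
      = ∑' j : ℤ, ENNReal.ofReal h * ENNReal.ofReal |W n j - ρ n j| :=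
        ENNReal.tsum_mul_left.symm
    _ ≤ ∑' j : ℤ, ENNReal.ofReal (c * ε) * ENNReal.ofReal |W n (j+1) - W n j| :=
        ENNReal.tsum_le_tsum hpt
    _ = ENNReal.ofReal (c * ε) * ∑' j : ℤ, ENNReal.ofReal |W n (j+1) - W n j| :=
        ENNReal.tsum_mul_left
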